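/- For any element a of a Boolean algebra B, the subalgebra y = ↓a ∪ ↑a' and the subalgebra z = ↓a' ∪ ↑a satisfy: y ∧ z = {0, a, a', 1} and y ∨ z = B in the lattice Sub(B) of subalgebras of B. -/
import Mathlib


/-- A (Boolean) subalgebra of a Boolean algebra. -/
def IsSubalg {B : Type*} [BooleanAlgebra B] (S : Set B) : Prop :=
  ⊥ ∈ S ∧ ⊤ ∈ S ∧ (∀ a ∈ S, ∀ b ∈ S, a ⊓ b ∈ S) ∧
    (∀ a ∈ S, ∀ b ∈ S, a ⊔ b ∈ S) ∧ (∀ a ∈ S, aᶜ ∈ S)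

/-- For `y = ↓a ∪ ↑a'` and `z = ↓a' ∪ ↑a` we have `y ∧ z = {0, a, a', 1}`
(meet of subalgebras is intersection) and `y ∨ z = B` (the join, i.e. the
smallest subalgebra containing both, is all of `B`). -/
theorem stmt3 {B : Type*} [BooleanAlgebra B] (a : B) :
    ({b : B | b ≤ a ∨ aᶜ ≤ b} ∩ {b : B | b ≤ aᶜ ∨ a ≤ b} = {⊥, a, aᶜ, ⊤}) ∧
    (⋂₀ {U : Set B | IsSubalg U ∧
        {b : B | b ≤ a ∨ aᶜ ≤ b} ∪ {b : B | b ≤ aᶜ ∨ a ≤ b} ⊆ U} = Set.univ) := by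
  constructor
  · ext b
    simp only [Set.mem_inter_iff, Set.mem_setOf_eq, Set.mem_insert_iff,
      Set.mem_singleton_iff]
    constructor
    · rintro ⟨h1 | h1, h2 | h2⟩
      · left
        exact le_bot_iff.mp (le_inf h1 h2 |>.trans (le_of_eq (inf_compl_eq_bot)))
      · right; left; exact le_antisymm h1 h2
      · right; right; left; exact le_antisymm h2 h1
      · right; right; right
        exact top_le_iff.mp ((le_of_eq (sup_compl_eq_top).symm).trans (sup_le h2 h1))
    · rintro (rfl | rfl | rfl | rfl)
      · exact ⟨Or.inl bot_le, Or.inl bot_le⟩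
      · exact ⟨Or.inl le_rfl, Or.inr le_rfl⟩
      · exact ⟨Or.inr le_rfl, Or.inl le_rfl⟩
      · exact ⟨Or.inr le_top, Or.inr le_top⟩
  · ext x
    simp only [Set.mem_sInter, Set.mem_setOf_eq, Set.mem_univ, iff_true]
    rintro U ⟨⟨-, -, -, hsup, -⟩, hsub⟩
    have h1 : x ⊓ a ∈ U := hsub (Or.inl (Or.inl inf_le_right))
    have h2 : x ⊓ aᶜ ∈ U := hsub (Or.inr (Or.inl inf_le_right))
    have := hsup _ h1 _ h2
    rwa [← inf_sup_left, sup_compl_eq_top, inf_top_eq] at this
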